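/- arXiv:1311.6111 — 2 statements merged into one kernel-verified Lean document; each statement's English description precedes it below -/
import Mathlib

section
/- Let $G$ be a group generated by subgroups $K_1, \dots, K_n$, each containing a subgroup $K$. Let $Y$ be a topological space with a transitive continuous $G$-action, and let $y \in Y$. If for each $i$ the orbit $Ky$ is dense in the orbit $K_i y$, then $Ky$ is dense in $Y$. -/
/-!
STATEMENT 0 (Lemma 3.4 of the paper, "lem:dense"):
Let `G` be a group generated by subgroups `K₁, …, Kₙ`, each containing a subgroup `K`.
Let `Y` be a topological space with a transitive continuous `G`-action and `y ∈ Y`.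
If for each `i` the orbit `K y` is dense in `Kᵢ y`, then `K y` is dense in `Y`.
-/

open scoped Pointwise

theorem dense_orbit_of_dense_in_generating_subgroups
    {G Y : Type*} [Group G] [TopologicalSpace Y] [MulAction G Y]
    [MulAction.IsPretransitive G Y]
    (hcont : ∀ g : G, Continuous fun x : Y => g • x)
    {n : ℕ} (K : Subgroup G) (Ki : Fin n → Subgroup G)
    (hKK : ∀ i, K ≤ Ki i)
    (hgen : Subgroup.closure (⋃ i, (Ki i : Set G)) = ⊤)
    (y : Y)
    (hdense : ∀ i, ((Ki i : Set G) • ({y} : Set Y)) ⊆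
      closure ((K : Set G) • ({y} : Set Y))) :
    Dense ((K : Set G) • ({y} : Set Y)) := by
  set D := closure ((K : Set G) • ({y} : Set Y)) with hD
  have hstep : ∀ i : Fin n, ∀ k ∈ Ki i, k • D ⊆ D := by
    intro i k hk
    have h1 : k • D ⊆ closure (k • ((K : Set G) • ({y} : Set Y))) := by
      rw [← Set.image_smul, ← Set.image_smul]
      exact image_closure_subset_closure_image (hcont k)
    have h2 : k • ((K : Set G) • ({y} : Set Y)) ⊆ (Ki i : Set G) • ({y} : Set Y) := by
      rintro x ⟨z, ⟨h, hh, w, hw, rfl⟩, rfl⟩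
      exact ⟨k * h, mul_mem hk (hKK i hh), w, hw, mul_smul k h w⟩
    calc k • D ⊆ closure (k • ((K : Set G) • ({y} : Set Y))) := h1
      _ ⊆ closure D := closure_mono (h2.trans (hdense i))
      _ = D := closure_closure
  set S : Subgroup G :=
    { carrier := {g : G | g • D ⊆ D ∧ g⁻¹ • D ⊆ D}
      one_mem' := by simp
      mul_mem' := by
        rintro a b ⟨ha, ha'⟩ ⟨hb, hb'⟩
        constructor
        · rw [mul_smul]
          exact (Set.smul_set_mono hb).trans ha
        · rw [mul_inv_rev, mul_smul]
          exact (Set.smul_set_mono ha').trans hb'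
      inv_mem' := by
        rintro a ⟨ha, ha'⟩
        exact ⟨ha', by simpa using ha⟩ } with hS
  have hall : ∀ g : G, g ∈ S := by
    have : Subgroup.closure (⋃ i, (Ki i : Set G)) ≤ S := by
      rw [Subgroup.closure_le]
      rintro g hg
      obtain ⟨_, ⟨i, rfl⟩, hi⟩ := hg
      exact ⟨hstep i g hi, hstep i g⁻¹ (inv_mem hi)⟩
    intro g
    exact this (hgen ▸ Subgroup.mem_top g)
  have hy : y ∈ D := subset_closure ⟨1, K.one_mem, y, rfl, one_smul G y⟩
  intro x
  obtain ⟨g, hg⟩ := MulAction.exists_smul_eq G y x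
  exact (hall g).1 ⟨y, hy, hg⟩
end

section
/- Let $G$ be a group generated by two subgroups $K_1$ and $K_2$, both containing a subgroup $K$. For a transitive continuous action of $G$ on a topological space $Y$ and a point $y \in Y$, suppose $Ky$ is dense in $K_1 y$ and dense in $K_2 y$. Then for every $l \geq 0$, the orbit $Ky$ is dense in the set $O_l := K_1 K_2 K_1 K_2 \cdots K_1 K_2 \, y$ ($l$ alternating factors $K_1 K_2$). -/
/-!
STATEMENT 1 (inductive step in the proof of Lemma 3.4):
`G` generated by two subgroups `K₁, K₂`, both containing `K`; transitive continuous
action on `Y`, `y ∈ Y`; if `K y` is dense in `K₁ y` and in `K₂ y`, then for every `l ≥ 0`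
the orbit `K y` is dense in `O_l := K₁ K₂ ⋯ K₁ K₂ y` (`l` alternating factors `K₁ K₂`).
The sets `O_l` are specified by their defining recursion.
-/

open scoped Pointwise

theorem dense_in_alternating_products
    {G Y : Type*} [Group G] [TopologicalSpace Y] [MulAction G Y]
    [MulAction.IsPretransitive G Y]
    (hcont : ∀ g : G, Continuous fun x : Y => g • x)
    (K K₁ K₂ : Subgroup G)
    (hK1 : K ≤ K₁) (hK2 : K ≤ K₂)
    (hgen : Subgroup.closure ((K₁ : Set G) ∪ (K₂ : Set G)) = ⊤)
    (y : Y)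
    (hdense1 : ((K₁ : Set G) • ({y} : Set Y)) ⊆ closure ((K : Set G) • ({y} : Set Y)))
    (hdense2 : ((K₂ : Set G) • ({y} : Set Y)) ⊆ closure ((K : Set G) • ({y} : Set Y)))
    (O : ℕ → Set Y)
    (hO0 : O 0 = {y})
    (hOsucc : ∀ l, O (l + 1) = (K₁ : Set G) • ((K₂ : Set G) • O l)) :
    ∀ l, O l ⊆ closure ((K : Set G) • ({y} : Set Y)) := by
  set C := closure ((K : Set G) • ({y} : Set Y)) with hC
  have key : ∀ (H : Subgroup G), K ≤ H → ((H : Set G) • ({y} : Set Y)) ⊆ C →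
      ∀ S : Set Y, S ⊆ C → (H : Set G) • S ⊆ C := by
    intro H hKH hH S hS x hx
    obtain ⟨g, hg, z, hz, rfl⟩ := hx
    have hzC : z ∈ C := hS hz
    have h2 : g • ((K : Set G) • ({y} : Set Y)) ⊆ C := by
      intro w hw
      obtain ⟨v, hv, rfl⟩ := hw
      obtain ⟨k, hk, u, hu, rfl⟩ := hv
      have hmem : (g * k) • u ∈ (H : Set G) • ({y} : Set Y) :=
        ⟨g * k, mul_mem hg (hKH hk), u, hu, rfl⟩
      rw [mul_smul] at hmem
      exact hH hmem
    have h1 : g • z ∈ closure (g • ((K : Set G) • ({y} : Set Y))) := by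
      have himg := image_closure_subset_closure_image (hcont g)
        (s := (K : Set G) • ({y} : Set Y))
      have hmem : g • z ∈ (fun x : Y => g • x) '' C := ⟨z, hzC, rfl⟩
      have := himg hmem
      simpa [Set.image_smul] using this
    exact closure_minimal h2 isClosed_closure h1
  intro l
  induction l with
  | zero =>
      rw [hO0]
      intro x hx
      rw [Set.mem_singleton_iff] at hx
      exact hx ▸ subset_closure ⟨1, one_mem K, y, rfl, one_smul G y⟩
  | succ n ih =>
      rw [hOsucc]
      exact key K₁ hK1 hdense1 _ (key K₂ hK2 hdense2 _ ih)
end
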